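/- Let F be a positive integer, let S be a numerical semigroup with Frobenius number F, and let l ∈ ℕ. The following conditions are equivalent: (1) l(S) = l and l ≥ 2; (2) there exist a numerical semigroup T with Frobenius number F and an element x ∈ msg(T) such that l(T) = l − 2, F/2 < x < F, and S = T∖{x}. -/

import Mathlib

def IsNumericalSemigroup (S : Set ℕ) : Prop :=
  0 ∈ S ∧ (∀ a ∈ S, ∀ b ∈ S, a + b ∈ S) ∧ Sᶜ.Finite

noncomputable def frobNS (S : Set ℕ) : ℤ :=
  sSup (insert (-1) ((fun n : ℕ => (n : ℤ)) '' Sᶜ))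

def toZNS (S : Set ℕ) : Set ℤ := {z : ℤ | ∃ n ∈ S, (n : ℤ) = z}

noncomputable def genusNS (S : Set ℕ) : ℕ := Sᶜ.ncard

def smallNS (S : Set ℕ) : Set ℕ := {s ∈ S | (s : ℤ) < frobNS S}

noncomputable def nNS (S : Set ℕ) : ℕ := (smallNS S).ncard

def LgapsNS (S : Set ℕ) : Set ℕ :=
  {x : ℕ | x ∉ S ∧ frobNS S - (x : ℤ) ∉ toZNS (smallNS S)}

noncomputable def lNS (S : Set ℕ) : ℕ := (LgapsNS S).ncard

noncomputable def hNS (S : Set ℕ) : ℕ := sSup (LgapsNS S)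

def PFNS (S : Set ℕ) : Set ℤ :=
  {x : ℤ | x ∉ toZNS S ∧ ∀ s ∈ S, s ≠ 0 → x + (s : ℤ) ∈ toZNS S}

noncomputable def typeNS (S : Set ℕ) : ℕ := (PFNS S).ncard

def msgNS (S : Set ℕ) : Set ℕ :=
  {x : ℕ | x ∈ S ∧ x ≠ 0 ∧ ∀ a ∈ S, ∀ b ∈ S, a ≠ 0 → b ≠ 0 → a + b ≠ x}

noncomputable def multNS (S : Set ℕ) : ℕ := sInf (S \ {0})

def IsIrreducibleNS (S : Set ℕ) : Prop :=
  IsNumericalSemigroup S ∧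
    ¬ ∃ T₁ T₂ : Set ℕ, IsNumericalSemigroup T₁ ∧ IsNumericalSemigroup T₂ ∧
        S ⊂ T₁ ∧ S ⊂ T₂ ∧ S = T₁ ∩ T₂

def IsSymmetricNS (S : Set ℕ) : Prop := IsIrreducibleNS S ∧ Odd (frobNS S)

def IsPseudoSymmetricNS (S : Set ℕ) : Prop := IsIrreducibleNS S ∧ Even (frobNS S)

def genNS (A : Set ℕ) : Set ℕ := (AddSubmonoid.closure A : Set ℕ)

def IsURSYNS (S : Set ℕ) : Prop :=
  ∃ T : Set ℕ, ∃ x : ℕ, IsSymmetricNS T ∧ x ∈ msgNS T ∧ S = T \ {x}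

def IsURPSYNS (S : Set ℕ) : Prop :=
  ∃ T : Set ℕ, ∃ x : ℕ, IsPseudoSymmetricNS T ∧ x ∈ msgNS T ∧ S = T \ {x}

def deltaNS (S : Set ℕ) : Set ℕ := {s ∈ S | 2 * (s : ℤ) < frobNS S}

def thetaNS (S : Set ℕ) : Set ℕ :=
  genNS (deltaNS S) ∪ {n : ℕ | frobNS S < (n : ℤ)}

noncomputable def CNS (F : ℕ) : Set ℕ :=
  if Odd F then (({0} : Set ℕ) ∪ {n : ℕ | (F + 1) / 2 ≤ n}) \ {F}
  else (({0} : Set ℕ) ∪ {n : ℕ | F / 2 + 1 ≤ n}) \ {F}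

lemma frob_eq' {S : Set ℕ} (hfin : Sᶜ.Finite) {F : ℕ} (hF : F ∉ S)
    (hub : ∀ n : ℕ, n ∉ S → n ≤ F) : frobNS S = (F : ℤ) := by
  have hA : (insert (-1) ((fun n : ℕ => (n:ℤ)) '' Sᶜ)).Finite :=
    (hfin.image _).insert _
  have hmem : (F:ℤ) ∈ insert (-1) ((fun n : ℕ => (n:ℤ)) '' Sᶜ) :=
    Or.inr ⟨F, hF, rfl⟩
  refine le_antisymm (csSup_le ⟨_, hmem⟩ ?_) (le_csSup hA.bddAbove hmem)
  rintro z (rfl | ⟨n, hn, rfl⟩)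
  · omega
  · simp only []; exact_mod_cast hub n hn

lemma frob_facts {S : Set ℕ} (hS : IsNumericalSemigroup S) {F : ℕ} (hF : 0 < F)
    (hSF : frobNS S = (F : ℤ)) : F ∉ S ∧ ∀ n : ℕ, n ∉ S → n ≤ F := by
  have hA : (insert (-1) ((fun n : ℕ => (n:ℤ)) '' Sᶜ)).Finite :=
    (hS.2.2.image _).insert _
  have hne : (insert (-1) ((fun n : ℕ => (n:ℤ)) '' Sᶜ)).Nonempty := ⟨-1, Or.inl rfl⟩
  have hmem := hne.csSup_mem hA
  rw [show sSup (insert (-1) ((fun n : ℕ => (n:ℤ)) '' Sᶜ)) = frobNS S from rfl, hSF] at hmem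
  have hFS : F ∉ S := by
    rcases hmem with h | ⟨n, hn, hn'⟩
    · omega
    · have : n = F := by simp only [] at hn'; exact_mod_cast hn'
      subst this; exact hn
  refine ⟨hFS, fun n hn => ?_⟩
  have h2 : (n:ℤ) ≤ sSup (insert (-1) ((fun n : ℕ => (n:ℤ)) '' Sᶜ)) :=
    le_csSup hA.bddAbove (Or.inr ⟨n, hn, rfl⟩)
  rw [show sSup (insert (-1) ((fun n : ℕ => (n:ℤ)) '' Sᶜ)) = frobNS S from rfl, hSF] at h2
  exact_mod_cast h2

lemma mem_Lgaps {S : Set ℕ} (hS : IsNumericalSemigroup S) {F : ℕ} (hF : 0 < F)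
    (hSF : frobNS S = (F : ℤ)) (x : ℕ) :
    x ∈ LgapsNS S ↔ 0 < x ∧ x < F ∧ x ∉ S ∧ F - x ∉ S := by
  obtain ⟨hFS, hub⟩ := frob_facts hS hF hSF
  have h0 : 0 ∈ S := hS.1
  constructor
  · rintro ⟨hxS, hx2⟩
    rw [hSF] at hx2
    have hxF : x ≤ F := hub x hxS
    have hx0 : x ≠ 0 := by rintro rfl; exact hxS h0
    have hxF' : x ≠ F := by
      rintro rfl
      exact hx2 ⟨0, ⟨h0, by rw [hSF]; exact_mod_cast hF⟩, by push_cast; ring⟩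
    refine ⟨by omega, by omega, hxS, fun hFx => ?_⟩
    refine hx2 ⟨F - x, ⟨hFx, by rw [hSF]; push_cast [Nat.cast_sub hxF]; omega⟩, ?_⟩
    push_cast [Nat.cast_sub hxF]; ring
  · rintro ⟨h1, h2, h3, h4⟩
    refine ⟨h3, ?_⟩
    rw [hSF]
    rintro ⟨n, ⟨hnS, hn2⟩, hn3⟩
    rw [hSF] at hn2
    have : n = F - x := by omega
    exact h4 (this ▸ hnS)

lemma coreNS {T : Set ℕ} (hT : IsNumericalSemigroup T) {F x : ℕ} (hF : 0 < F)
    (hTF : frobNS T = (F : ℤ)) (hx : x ∈ msgNS T) (h2x : F < 2 * x) (hxF : x < F) :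
    IsNumericalSemigroup (T \ {x}) ∧ frobNS (T \ {x}) = (F : ℤ) ∧
      lNS (T \ {x}) = lNS T + 2 := by
  obtain ⟨hxT, hx0, hxmsg⟩ := hx
  obtain ⟨hFT, hub⟩ := frob_facts hT hF hTF
  have hFxT : F - x ∉ T := by
    intro hc
    have h1 : F - x + x ∈ T := hT.2.1 _ hc _ hxT
    rw [show F - x + x = F by omega] at h1
    exact hFT h1
  have hSNS : IsNumericalSemigroup (T \ {x}) := by
    refine ⟨⟨hT.1, fun h => hx0 (Set.mem_singleton_iff.mp h).symm⟩, ?_, ?_⟩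
    · rintro a ⟨haT, hax⟩ b ⟨hbT, hbx⟩
      refine ⟨hT.2.1 a haT b hbT, fun heq => ?_⟩
      have heq' : a + b = x := Set.mem_singleton_iff.mp heq
      rcases Nat.eq_zero_or_pos a with rfl | ha0
      · exact hbx (by simpa using heq')
      rcases Nat.eq_zero_or_pos b with rfl | hb0
      · exact hax (by simpa using heq')
      exact hxmsg a haT b hbT (by omega) (by omega) heq'
    · refine (hT.2.2.union (Set.finite_singleton x)).subset ?_
      intro n hn
      by_cases hnT : n ∈ T
      · exact Or.inr (by_contra fun hc => hn ⟨hnT, hc⟩)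
      · exact Or.inl hnT
  have hSF : frobNS (T \ {x}) = (F : ℤ) := by
    refine frob_eq' hSNS.2.2 (fun h => hFT h.1) (fun n hn => ?_)
    by_cases hnT : n ∈ T
    · have : n = x := by_contra fun hc => hn ⟨hnT, hc⟩
      omega
    · exact hub n hnT
  refine ⟨hSNS, hSF, ?_⟩
  have hset : LgapsNS (T \ {x}) = insert x (insert (F - x) (LgapsNS T)) := by
    ext y
    simp only [Set.mem_insert_iff, mem_Lgaps hSNS hF hSF, mem_Lgaps hT hF hTF]
    constructor
    · rintro ⟨h1, h2, h3, h4⟩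
      by_cases hyx : y = x
      · exact Or.inl hyx
      by_cases hyFx : y = F - x
      · exact Or.inr (Or.inl hyFx)
      refine Or.inr (Or.inr ⟨h1, h2, fun hc => h3 ⟨hc, hyx⟩, fun hc => h4 ⟨hc, ?_⟩⟩)
      intro hc2
      exact hyFx (by have := Set.mem_singleton_iff.mp hc2; omega)
    · rintro (rfl | rfl | ⟨h1, h2, h3, h4⟩)
      · exact ⟨by omega, hxF, fun h => h.2 rfl, fun h => hFxT h.1⟩
      · refine ⟨by omega, by omega, fun h => hFxT h.1, ?_⟩
        rw [show F - (F - x) = x by omega]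
        exact fun h => h.2 rfl
      · exact ⟨h1, h2, fun h => h3 h.1, fun h => h4 h.1⟩
  have hLfin : (LgapsNS T).Finite := hT.2.2.subset (fun y hy => hy.1)
  have hFxL : F - x ∉ LgapsNS T := by
    intro hc
    have := ((mem_Lgaps hT hF hTF _).mp hc).2.2.2
    rw [show F - (F - x) = x by omega] at this
    exact this hxT
  have hxL : x ∉ insert (F - x) (LgapsNS T) := by
    rintro (h | h)
    · omega
    · exact ((mem_Lgaps hT hF hTF _).mp h).2.2.1 hxT
  rw [lNS, hset, Set.ncard_insert_of_notMem hxL (hLfin.insert _),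
    Set.ncard_insert_of_notMem hFxL hLfin]
  rfl

/-- For a numerical semigroup S with Frobenius number F > 0 and l ∈ ℕ:
l(S) = l ∧ l ≥ 2 iff there are a numerical semigroup T with Frobenius number F and
x ∈ msg(T) with l(T) = l − 2, F/2 < x < F, and S = T∖{x}. -/
theorem stmt6 (F : ℕ) (hF : 0 < F) (S : Set ℕ) (hS : IsNumericalSemigroup S)
    (hSF : frobNS S = (F : ℤ)) (l : ℕ) :
    (lNS S = l ∧ 2 ≤ l) ↔
    ∃ T : Set ℕ, ∃ x : ℕ, IsNumericalSemigroup T ∧ frobNS T = (F : ℤ) ∧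
      x ∈ msgNS T ∧ (lNS T : ℤ) = (l : ℤ) - 2 ∧
      (F : ℤ) < 2 * (x : ℤ) ∧ x < F ∧ S = T \ {x} := by
  constructor
  · rintro ⟨hl, hl2⟩
    obtain ⟨hFS, hub⟩ := frob_facts hS hF hSF
    have hch := mem_Lgaps hS hF hSF
    have hLfin : (LgapsNS S).Finite := hS.2.2.subset (fun y hy => hy.1)
    have hLne : (LgapsNS S).Nonempty :=
      Set.nonempty_of_ncard_ne_zero (by rw [show (LgapsNS S).ncard = lNS S from rfl, hl]; omega)
    obtain ⟨h, hhL, hmax⟩ := Set.Finite.exists_maximalFor id _ hLfin hLne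
    have hub' : ∀ y ∈ LgapsNS S, y ≤ h := by
      intro y hy
      by_contra hc
      have := hmax (j := y) hy (by simp only [id_eq]; omega)
      simp only [id_eq] at this
      omega
    obtain ⟨hh1, hh2, hh3, hh4⟩ := (hch h).mp hhL
    -- symmetry of Lgaps
    have hsym : ∀ y ∈ LgapsNS S, F - y ∈ LgapsNS S := by
      intro y hy
      obtain ⟨g1, g2, g3, g4⟩ := (hch y).mp hy
      exact (hch _).mpr ⟨by omega, by omega, g4, by rw [show F - (F - y) = y by omega]; exact g3⟩
    have h2h : F < 2 * h := by
      by_contra hc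
      have hsub : LgapsNS S ⊆ {h} := by
        intro y hy
        have h5 := hub' y hy
        have h6 := hub' _ (hsym y hy)
        obtain ⟨g1, g2, _, _⟩ := (hch y).mp hy
        have : y = h := by omega
        simpa using this
      have := Set.ncard_le_ncard hsub (Set.finite_singleton h)
      rw [Set.ncard_singleton, show (LgapsNS S).ncard = lNS S from rfl, hl] at this
      omega
    -- key: h + s ∈ S for s ∈ S, s ≠ 0
    have hkey : ∀ s ∈ S, s ≠ 0 → h + s ∈ S := by
      intro s hsS hs0
      by_contra hhs
      have hhsF : h + s ≤ F := hub _ hhs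
      have hnL : h + s ∉ LgapsNS S := fun hm => by have := hub' _ hm; omega
      by_cases hEq : h + s = F
      · rw [show F - h = s by omega] at hh4; exact hh4 hsS
      · have hFhs : F - (h + s) ∈ S := by
          by_contra hc
          exact hnL ((hch _).mpr ⟨by omega, by omega, hhs, hc⟩)
        have : F - (h + s) + s ∈ S := hS.2.1 _ hFhs _ hsS
        rw [show F - (h + s) + s = F - h by omega] at this
        exact hh4 this
    have hhh : h + h ∈ S := by
      by_contra hc
      have := hub _ hc
      omega
    set T := insert h S with hTdef
    have hTNS : IsNumericalSemigroup T := by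
      refine ⟨Or.inr hS.1, ?_, ?_⟩
      · rintro a (rfl | haS) b (rfl | hbS)
        · exact Or.inr hhh
        · rcases Nat.eq_zero_or_pos b with rfl | hb0
          · exact Or.inl (by simp)
          · exact Or.inr (hkey b hbS (by omega))
        · rcases Nat.eq_zero_or_pos a with rfl | ha0
          · exact Or.inl (by simp)
          · exact Or.inr (by rw [Nat.add_comm]; exact hkey a haS (by omega))
        · exact Or.inr (hS.2.1 a haS b hbS)
      · exact hS.2.2.subset (Set.compl_subset_compl.mpr (Set.subset_insert _ _))
    have hTF : frobNS T = (F : ℤ) := by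
      refine frob_eq' hTNS.2.2 ?_ (fun n hn => hub n (fun hc => hn (Or.inr hc)))
      rintro (rfl | hc)
      · omega
      · exact hFS hc
    have hmsg : h ∈ msgNS T := by
      refine ⟨Or.inl rfl, by omega, ?_⟩
      rintro a (rfl | haS) b hb ha0 hb0 heq
      · omega
      · rcases hb with rfl | hbS
        · omega
        · exact hh3 (heq ▸ hS.2.1 a haS b hbS)
    have hdiff : T \ {h} = S := Set.insert_sdiff_self_of_notMem hh3
    obtain ⟨-, -, hlcard⟩ := coreNS hTNS hF hTF hmsg h2h hh2
    rw [hdiff, hl] at hlcard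
    exact ⟨T, h, hTNS, hTF, hmsg, by omega, by exact_mod_cast h2h, hh2, hdiff.symm⟩
  · rintro ⟨T, x, hTNS, hTF, hx, hlT, h2x, hxF, rfl⟩
    have h2x' : F < 2 * x := by exact_mod_cast h2x
    obtain ⟨-, -, hlcard⟩ := coreNS hTNS hF hTF hx h2x' hxF
    omega
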